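/- Let 0 < p_1 < p_2 < ... < p_n, let c_1, ..., c_n be real numbers not all zero, and let r be a positive real number different from 1, 2, ..., n-1. Then the function f on (0,∞) defined by f(x) = Σ_{j=1}^n c_j (x^r - p_j^r)/(x - p_j) (with the quotient interpreted as the limiting value r·p_j^{r-1} at x = p_j) has at most n-1 zeros in (0,∞). -/

import Mathlib

open Matrix Polynomial Finset Filter Topology

/-- The Loewner matrix `L_r` associated with points `p 0, ..., p (n-1)` and exponent `r`:
its `(i,j)` entry is `(p i ^ r - p j ^ r) / (p i - p j)` for `i ≠ j` and `r * p i ^ (r-1)`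
for `i = j` (powers are real powers `Real.rpow`). -/
noncomputable def loewner {n : ℕ} (p : Fin n → ℝ) (r : ℝ) : Matrix (Fin n) (Fin n) ℝ :=
  Matrix.of fun i j => if i = j then r * p i ^ (r - 1) else (p i ^ r - p j ^ r) / (p i - p j)


lemma rolle_finset (h h' : ℝ → ℝ) (hd : ∀ x : ℝ, 0 < x → HasDerivAt h (h' x) x) :
    ∀ (s : Finset ℝ), (∀ x ∈ s, 0 < x ∧ h x = 0) →
      ∃ t : Finset ℝ, s.card ≤ t.card + 1 ∧
        (∀ x ∈ t, 0 < x ∧ h' x = 0 ∧ x ∉ s ∧ ∃ z ∈ s, x < z) := by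
  suffices H : ∀ (n : ℕ) (s : Finset ℝ), s.card = n → (∀ x ∈ s, 0 < x ∧ h x = 0) →
      ∃ t : Finset ℝ, s.card ≤ t.card + 1 ∧
        (∀ x ∈ t, 0 < x ∧ h' x = 0 ∧ x ∉ s ∧ ∃ z ∈ s, x < z) by
    intro s hs; exact H s.card s rfl hs
  intro n
  induction n using Nat.strong_induction_on with
  | _ n ih =>
    intro s hn hs
    match n, hn with
    | 0, hn => exact ⟨∅, by simp [hn], by simp⟩
    | 1, hn => exact ⟨∅, by simp [hn], by simp⟩
    | (m+2), hn =>
      have hne : s.Nonempty := by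
        rw [← Finset.card_pos, hn]; omega
      set a := s.max' hne with ha
      have haS : a ∈ s := s.max'_mem hne
      set s' := s.erase a with hs'
      have hcard' : s'.card = m + 1 := by
        rw [hs', Finset.card_erase_of_mem haS, hn]; omega
      have hne' : s'.Nonempty := by rw [← Finset.card_pos, hcard']; omega
      set b := s'.max' hne' with hb
      have hbS' : b ∈ s' := s'.max'_mem hne'
      have hbS : b ∈ s := Finset.mem_of_mem_erase hbS'
      have hba : b < a := lt_of_le_of_ne (s.le_max' b hbS) (Finset.ne_of_mem_erase hbS')
      have hb0 : 0 < b := (hs b hbS).1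
      -- Rolle between b and a
      have hcont : ContinuousOn h (Set.Icc b a) := by
        intro x hx
        exact ((hd x (lt_of_lt_of_le hb0 hx.1)).continuousAt).continuousWithinAt
      obtain ⟨c, hcmem, hc0⟩ := exists_hasDerivAt_eq_zero hba hcont
        (by rw [(hs b hbS).2, (hs a haS).2])
        (fun x hx => hd x (lt_trans hb0 hx.1))
      obtain ⟨t', hcard'', ht'⟩ := ih (m+1) (by omega) s' hcard'
        (fun x hx => hs x (Finset.mem_of_mem_erase hx))
      have hcb : b < c := hcmem.1
      have hct' : c ∉ t' := by
        intro hc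
        obtain ⟨z, hz, hxz⟩ := (ht' c hc).2.2.2
        exact absurd (lt_trans hxz (lt_of_le_of_lt (s'.le_max' z hz) hcb)) (lt_irrefl c)
      have hcs : c ∉ s := by
        intro hcs
        rcases eq_or_ne c a with hca | hca
        · exact absurd hcmem.2 (by simp [hca])
        · exact absurd (s'.le_max' c (Finset.mem_erase.2 ⟨hca, hcs⟩)) (not_le.2 hcb)
      refine ⟨insert c t', ?_, ?_⟩
      · rw [Finset.card_insert_of_notMem hct', hn]
        omega
      · intro x hx
        rcases Finset.mem_insert.1 hx with rfl | hx
        · exact ⟨lt_trans hb0 hcb, hc0, hcs, a, haS, hcmem.2⟩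
        · obtain ⟨h1, h2, h3, z, hz, hxz⟩ := ht' x hx
          have hzb : z ≤ b := s'.le_max' z hz
          refine ⟨h1, h2, ?_, z, Finset.mem_of_mem_erase hz, hxz⟩
          intro hxs
          rcases eq_or_ne x a with rfl | hxa
          · exact absurd (lt_trans hxz (lt_of_le_of_lt hzb hba)) (lt_irrefl _)
          · exact h3 (Finset.mem_erase.2 ⟨hxa, hxs⟩)

noncomputable def lfzQ {n : ℕ} (p c : Fin n → ℝ) : ℝ[X] :=
  ∑ j, C (c j) * ∏ k ∈ univ.erase j, (X - C (p k))

noncomputable def lfzP {n : ℕ} (p c : Fin n → ℝ) (r : ℝ) : ℝ[X] :=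
  ∑ j, C (c j * p j ^ r) * ∏ k ∈ univ.erase j, (X - C (p k))

noncomputable def lfzQs {n : ℕ} (p c : Fin n → ℝ) (r : ℝ) : ℕ → ℝ[X]
  | 0 => lfzQ p c
  | (k+1) => C (r - k) * lfzQs p c r k + X * derivative (lfzQs p c r k)

noncomputable def lfzg {n : ℕ} (p c : Fin n → ℝ) (r : ℝ) (k : ℕ) (x : ℝ) : ℝ :=
  x ^ (r - k) * (lfzQs p c r k).eval x - ((derivative (R := ℝ))^[k] (lfzP p c r)).eval x

lemma lfz_natDegree_aux {n : ℕ} (p : Fin n → ℝ) (a : Fin n → ℝ) :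
    (∑ j, C (a j) * ∏ k ∈ univ.erase j, (X - C (p k))).natDegree ≤ n - 1 := by
  apply Polynomial.natDegree_sum_le_of_forall_le
  intro j _
  apply le_trans (Polynomial.natDegree_mul_le)
  rw [Polynomial.natDegree_C]
  simp only [zero_add]
  apply le_trans (Polynomial.natDegree_prod_le _ _)
  apply le_trans (Finset.sum_le_card_nsmul _ _ 1 ?_)
  · rw [Finset.card_erase_of_mem (Finset.mem_univ j), Finset.card_univ, Fintype.card_fin]
    simp
  · intro k _
    exact le_of_eq (Polynomial.natDegree_X_sub_C _)

lemma lfzQ_coeff_zero {n : ℕ} (p c : Fin n → ℝ) {i : ℕ} (hi : n - 1 < i) :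
    (lfzQ p c).coeff i = 0 :=
  Polynomial.coeff_eq_zero_of_natDegree_lt (lt_of_le_of_lt (lfz_natDegree_aux p c) hi)

lemma lfzQs_coeff {n : ℕ} (p c : Fin n → ℝ) (r : ℝ) (k i : ℕ) :
    (lfzQs p c r k).coeff i = (∏ j ∈ range k, (r - j + i)) * (lfzQ p c).coeff i := by
  induction k with
  | zero => simp [lfzQs]
  | succ k ih =>
    have : (X * derivative (lfzQs p c r k)).coeff i = i * (lfzQs p c r k).coeff i := by
      cases i with
      | zero => simp
      | succ m =>
        rw [Polynomial.coeff_X_mul, Polynomial.coeff_derivative]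
        push_cast; ring
    rw [lfzQs, Polynomial.coeff_add, Polynomial.coeff_C_mul, this, ih,
      Finset.prod_range_succ]
    ring

lemma lfzQ_eval_p {n : ℕ} (p : Fin n → ℝ) (a : Fin n → ℝ) (j : Fin n) (hinj : Function.Injective p) :
    (∑ k, C (a k) * ∏ l ∈ univ.erase k, (X - C (p l))).eval (p j)
      = a j * ∏ l ∈ univ.erase j, (p j - p l) := by
  rw [Polynomial.eval_finset_sum]
  rw [Finset.sum_eq_single j]
  · simp [Polynomial.eval_prod]
  · intro k _ hkj
    rw [Polynomial.eval_mul, Polynomial.eval_prod]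
    apply mul_eq_zero_of_right
    apply Finset.prod_eq_zero (Finset.mem_erase.2 ⟨fun h => hkj h.symm, Finset.mem_univ j⟩)
    simp
  · simp

lemma lfzQ_ne_zero {n : ℕ} (p c : Fin n → ℝ) (hinj : Function.Injective p)
    (hc : c ≠ 0) : lfzQ p c ≠ 0 := by
  obtain ⟨j, hj⟩ : ∃ j, c j ≠ 0 := by
    by_contra h
    push_neg at h
    exact hc (funext h)
  intro h0
  have := lfzQ_eval_p p c j hinj
  rw [show (∑ k, C (c k) * ∏ l ∈ univ.erase k, (X - C (p l))) = lfzQ p c from rfl, h0] at this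
  simp only [Polynomial.eval_zero] at this
  have hprod : ∏ l ∈ univ.erase j, (p j - p l) ≠ 0 := by
    rw [Finset.prod_ne_zero_iff]
    intro l hl
    exact sub_ne_zero.2 fun h => (Finset.mem_erase.1 hl).1 (hinj h.symm)
  exact (mul_ne_zero hj hprod) this.symm

lemma lfz_factor_ne_zero {n : ℕ} {r : ℝ} (hr : 0 < r)
    (hri : ∀ k : ℕ, 1 ≤ k → k ≤ n - 1 → r ≠ (k : ℝ)) {j i : ℕ} (hj : j < n) :
    r - j + i ≠ 0 := by
  intro h
  have hrji : r = (j : ℝ) - i := by linarith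
  rcases le_or_gt j i with hle | hlt
  · have : (j : ℝ) - i ≤ 0 := by
      have : (j : ℝ) ≤ i := Nat.cast_le.2 hle
      linarith
    linarith
  · have h1 : 1 ≤ j - i := by omega
    have h2 : j - i ≤ n - 1 := by omega
    refine hri (j - i) h1 h2 ?_
    rw [hrji]
    push_cast [Nat.cast_sub hlt.le]
    ring

lemma lfzQs_natDegree {n : ℕ} (p c : Fin n → ℝ) (r : ℝ) (k : ℕ) :
    (lfzQs p c r k).natDegree ≤ n - 1 := by
  rw [Polynomial.natDegree_le_iff_coeff_eq_zero]
  intro i hi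
  rw [lfzQs_coeff, lfzQ_coeff_zero p c hi, mul_zero]

lemma lfzQs_ne_zero {n : ℕ} (p c : Fin n → ℝ) {r : ℝ} (hr : 0 < r)
    (hri : ∀ k : ℕ, 1 ≤ k → k ≤ n - 1 → r ≠ (k : ℝ)) (hQ : lfzQ p c ≠ 0) :
    lfzQs p c r n ≠ 0 := by
  intro h0
  apply hQ
  have h := lfzQs_coeff p c r n (lfzQ p c).natDegree
  rw [h0, Polynomial.coeff_zero] at h
  have hprod : (∏ j ∈ range n, (r - j + (lfzQ p c).natDegree)) ≠ 0 := by
    rw [Finset.prod_ne_zero_iff]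
    intro j hj
    exact lfz_factor_ne_zero hr hri (Finset.mem_range.1 hj)
  have : (lfzQ p c).coeff (lfzQ p c).natDegree = 0 := by
    rcases mul_eq_zero.1 h.symm with h | h
    · exact absurd h hprod
    · exact h
  exact Polynomial.leadingCoeff_eq_zero.1 this

lemma lfzg_hasDerivAt {n : ℕ} (p c : Fin n → ℝ) (r : ℝ) (k : ℕ) {x : ℝ} (hx : 0 < x) :
    HasDerivAt (lfzg p c r k) (lfzg p c r (k+1) x) x := by
  have h1 : HasDerivAt (fun y : ℝ => y ^ (r - k)) ((r - k) * x ^ (r - k - 1)) x :=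
    Real.hasDerivAt_rpow_const (Or.inl hx.ne')
  have h2 : HasDerivAt (fun y : ℝ => (lfzQs p c r k).eval y)
      ((derivative (lfzQs p c r k)).eval x) x := (lfzQs p c r k).hasDerivAt x
  have h3 : HasDerivAt (fun y : ℝ => ((derivative (R := ℝ))^[k] (lfzP p c r)).eval y)
      ((derivative ((derivative (R := ℝ))^[k] (lfzP p c r))).eval x) x :=
    Polynomial.hasDerivAt _ x
  have h := ((h1.mul h2).sub h3)
  refine h.congr_deriv (Eq.symm ?_)
  have hxr : x ^ (r - (k+1 : ℕ)) * x = x ^ (r - k) := by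
    rw [← Real.rpow_add_one hx.ne']
    push_cast
    ring_nf
  have hxr2 : x ^ (r - (k+1 : ℕ)) = x ^ (r - k - 1) := by
    push_cast
    ring_nf
  unfold lfzg
  rw [Function.iterate_succ_apply', lfzQs]
  simp only [Polynomial.eval_add, Polynomial.eval_mul, Polynomial.eval_C, Polynomial.eval_X]
  rw [← hxr, hxr2]
  ring

lemma lfzg_eq_f_mul_W {n : ℕ} (p c : Fin n → ℝ) (r : ℝ) {x : ℝ} (hx : 0 < x)
    (hp : ∀ i, 0 < p i) :
    lfzg p c r 0 x =
      (∑ j, c j * (if x = p j then r * p j ^ (r - 1) else (x ^ r - p j ^ r) / (x - p j)))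
        * ∏ k, (x - p k) := by
  have key : ∀ j : Fin n,
      (if x = p j then r * p j ^ (r - 1) else (x ^ r - p j ^ r) / (x - p j)) * (x - p j)
        = x ^ r - p j ^ r := by
    intro j
    by_cases hxy : x = p j
    · simp [hxy]
    · rw [if_neg hxy, div_mul_cancel₀ _ (sub_ne_zero.2 hxy)]
  unfold lfzg lfzQs lfzQ lfzP
  simp only [Function.iterate_zero, id_eq, Polynomial.eval_finset_sum, Polynomial.eval_mul,
    Polynomial.eval_C, Polynomial.eval_prod, Polynomial.eval_sub, Polynomial.eval_X,
    Nat.cast_zero, sub_zero]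
  rw [Finset.mul_sum, Finset.sum_mul, ← Finset.sum_sub_distrib]
  apply Finset.sum_congr rfl
  intro j _
  have hkey := key j
  rw [← Finset.mul_prod_erase univ (fun k => x - p k) (Finset.mem_univ j)]
  linear_combination (-(c j * ∏ k ∈ univ.erase j, (x - p k))) * hkey

lemma lfz_f_tendsto {n : ℕ} (p c : Fin n → ℝ) (r : ℝ) (hp : ∀ i, 0 < p i)
    (hinj : Function.Injective p) (j : Fin n) :
    Tendsto (fun x => ∑ k, c k * (if x = p k then r * p k ^ (r - 1)
        else (x ^ r - p k ^ r) / (x - p k)))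
      (𝓝[≠] (p j))
      (𝓝 (∑ k, c k * (if p j = p k then r * p k ^ (r - 1)
        else (p j ^ r - p k ^ r) / (p j - p k)))) := by
  apply tendsto_finset_sum
  intro k _
  rcases eq_or_ne k j with rfl | hkj
  · -- the singular term: slope of rpow
    have hder : HasDerivAt (fun x : ℝ => x ^ r) (r * p k ^ (r - 1)) (p k) :=
      Real.hasDerivAt_rpow_const (Or.inl (hp k).ne')
    have hslope := hasDerivAt_iff_tendsto_slope.1 hder
    have heq : (fun x => c k * (if x = p k then r * p k ^ (r - 1)
        else (x ^ r - p k ^ r) / (x - p k))) =ᶠ[𝓝[≠] (p k)]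
        (fun x => c k * slope (fun y : ℝ => y ^ r) (p k) x) := by
      filter_upwards [self_mem_nhdsWithin] with x hx
      have hx' : x ≠ p k := hx
      rw [if_neg hx', slope_def_field]
    rw [if_pos rfl]
    exact Tendsto.congr' heq.symm ((hslope.const_mul (c k)))
  · -- the regular term
    have hpk : p j ≠ p k := fun h => hkj (hinj h).symm
    have hcont : ContinuousAt (fun x : ℝ => c k * ((x ^ r - p k ^ r) / (x - p k))) (p j) := by
      apply ContinuousAt.mul continuousAt_const
      apply ContinuousAt.div
      · exact (Real.continuousAt_rpow_const _ _ (Or.inl (hp j).ne')).sub continuousAt_const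
      · exact (continuousAt_id).sub continuousAt_const
      · exact sub_ne_zero.2 hpk
    have heq : (fun x => c k * (if x = p k then r * p k ^ (r - 1)
        else (x ^ r - p k ^ r) / (x - p k))) =ᶠ[𝓝[≠] (p j)]
        (fun x => c k * ((x ^ r - p k ^ r) / (x - p k))) := by
      have : {x : ℝ | x ≠ p k} ∈ 𝓝[≠] (p j) :=
        nhdsWithin_le_nhds (isOpen_ne.mem_nhds hpk)
      filter_upwards [this] with x hx
      rw [if_neg hx]
    rw [if_neg hpk]
    exact Tendsto.congr' heq.symm (hcont.continuousWithinAt.tendsto)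

lemma lfzg1_at_p {n : ℕ} (p c : Fin n → ℝ) (r : ℝ) (hp : ∀ i, 0 < p i)
    (hinj : Function.Injective p) (j : Fin n)
    (hf : (∑ k, c k * (if p j = p k then r * p k ^ (r - 1)
        else (p j ^ r - p k ^ r) / (p j - p k))) = 0) :
    lfzg p c r 1 (p j) = 0 := by
  have h1 : HasDerivAt (lfzg p c r 0) (lfzg p c r 1 (p j)) (p j) :=
    lfzg_hasDerivAt p c r 0 (hp j)
  have hslope := hasDerivAt_iff_tendsto_slope.1 h1
  have hg0 : lfzg p c r 0 (p j) = 0 := by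
    rw [lfzg_eq_f_mul_W p c r (hp j) hp]
    apply mul_eq_zero_of_right
    exact Finset.prod_eq_zero (Finset.mem_univ j) (sub_self _)
  have h2 : Tendsto (slope (lfzg p c r 0) (p j)) (𝓝[≠] (p j)) (𝓝 0) := by
    have heq : slope (lfzg p c r 0) (p j) =ᶠ[𝓝[≠] (p j)]
        (fun x => (∑ k, c k * (if x = p k then r * p k ^ (r - 1)
          else (x ^ r - p k ^ r) / (x - p k))) * ∏ k ∈ univ.erase j, (x - p k)) := by
      have hpos : {x : ℝ | 0 < x} ∈ 𝓝[≠] (p j) :=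
        nhdsWithin_le_nhds (isOpen_lt continuous_const continuous_id |>.mem_nhds (hp j))
      filter_upwards [self_mem_nhdsWithin, hpos] with x hx hx0
      have hx' : x ≠ p j := hx
      have hxne : x - p j ≠ 0 := sub_ne_zero.2 hx'
      rw [slope_def_field, hg0, sub_zero, lfzg_eq_f_mul_W p c r hx0 hp,
        ← Finset.mul_prod_erase univ (fun k => x - p k) (Finset.mem_univ j)]
      field_simp
    rw [Filter.tendsto_congr' heq]
    have hprod : Tendsto (fun x => ∏ k ∈ univ.erase j, (x - p k)) (𝓝[≠] (p j))
        (𝓝 (∏ k ∈ univ.erase j, (p j - p k))) := by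
      apply Filter.Tendsto.mono_left _ nhdsWithin_le_nhds
      exact (Continuous.tendsto (by continuity) (p j))
    have h3 := (lfz_f_tendsto p c r hp hinj j).mul hprod
    rw [hf, zero_mul] at h3
    exact h3
  exact tendsto_nhds_unique hslope h2

/-- If `c : Fin n → ℝ` is not identically zero and `r > 0` is different from
`1, 2, …, n-1`, then the function `f x = ∑ j, c j * (x^r - (p j)^r)/(x - p j)`
(with the quotient interpreted as `r * (p j)^(r-1)` at `x = p j`) has at most
`n - 1` zeros in `(0, ∞)`. -/
theorem loewner_function_few_zeros {n : ℕ} (p : Fin n → ℝ)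
    (hp : ∀ i, 0 < p i) (hmono : StrictMono p)
    (c : Fin n → ℝ) (hc : c ≠ 0)
    (r : ℝ) (hr : 0 < r) (hri : ∀ k : ℕ, 1 ≤ k → k ≤ n - 1 → r ≠ (k : ℝ)) :
    {x : ℝ | 0 < x ∧
        (∑ j, c j * (if x = p j then r * p j ^ (r - 1) else (x ^ r - p j ^ r) / (x - p j)))
          = 0}.Finite ∧
    {x : ℝ | 0 < x ∧
        (∑ j, c j * (if x = p j then r * p j ^ (r - 1) else (x ^ r - p j ^ r) / (x - p j)))
          = 0}.ncard ≤ n - 1 := by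
  rcases Nat.eq_zero_or_pos n with rfl | hn
  · exact absurd (_root_.funext fun i => Fin.elim0 i) hc
  have hinj : Function.Injective p := hmono.injective
  -- key counting claim
  have key : ∀ s : Finset ℝ,
      (∀ x ∈ s, 0 < x ∧
        (∑ j, c j * (if x = p j then r * p j ^ (r - 1) else (x ^ r - p j ^ r) / (x - p j)))
          = 0) → s.card ≤ n - 1 := by
    intro s hs
    by_contra hbig
    push_neg at hbig
    have hns : n ≤ s.card := by omega
    obtain ⟨s', hs's, hs'card⟩ := Finset.exists_subset_card_eq hns
    have hs' : ∀ x ∈ s', 0 < x ∧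
        (∑ j, c j * (if x = p j then r * p j ^ (r - 1) else (x ^ r - p j ^ r) / (x - p j)))
          = 0 := fun x hx => hs x (hs's hx)
    clear hs hs's hbig hns
    -- grid points
    set Pfin : Finset ℝ := Finset.univ.image p with hPfin
    have hPcard : Pfin.card = n := by
      rw [hPfin, Finset.card_image_of_injective _ hinj, Finset.card_univ, Fintype.card_fin]
    set s0 := s' ∪ Pfin with hs0
    have hs0card : s0.card + (s' ∩ Pfin).card = 2 * n := by
      rw [hs0, Finset.card_union_add_card_inter, hs'card, hPcard]; ring
    have hs0zero : ∀ x ∈ s0, 0 < x ∧ lfzg p c r 0 x = 0 := by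
      intro x hx
      rcases Finset.mem_union.1 hx with hx | hx
      · obtain ⟨hx0, hxf⟩ := hs' x hx
        refine ⟨hx0, ?_⟩
        rw [lfzg_eq_f_mul_W p c r hx0 hp, hxf, zero_mul]
      · obtain ⟨i, _, rfl⟩ := Finset.mem_image.1 hx
        refine ⟨hp i, ?_⟩
        rw [lfzg_eq_f_mul_W p c r (hp i) hp]
        exact mul_eq_zero_of_right _ (Finset.prod_eq_zero (Finset.mem_univ i) (sub_self _))
    obtain ⟨t1, ht1card, ht1⟩ := rolle_finset (lfzg p c r 0) (lfzg p c r 1)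
      (fun x hx => lfzg_hasDerivAt p c r 0 hx) s0 hs0zero
    set E := s' ∩ Pfin with hEdef
    have hE : ∀ x ∈ E, 0 < x ∧ lfzg p c r 1 x = 0 := by
      intro x hx
      obtain ⟨hxs, hxP⟩ := Finset.mem_inter.1 hx
      obtain ⟨i, _, rfl⟩ := Finset.mem_image.1 hxP
      exact ⟨hp i, lfzg1_at_p p c r hp hinj i (hs' _ hxs).2⟩
    have hdisj : Disjoint t1 E := by
      rw [Finset.disjoint_left]
      intro x hx hxE
      exact (ht1 x hx).2.2.1 (Finset.mem_union.2 (Or.inl (Finset.mem_inter.1 hxE).1))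
    -- iterate Rolle
    have iter : ∀ m : ℕ, ∃ t : Finset ℝ, 2*n ≤ t.card + (m+1) ∧
        ∀ x ∈ t, 0 < x ∧ lfzg p c r (m+1) x = 0 := by
      intro m
      induction m with
      | zero =>
        refine ⟨t1 ∪ E, ?_, ?_⟩
        · rw [Finset.card_union_of_disjoint hdisj]
          omega
        · intro x hx
          rcases Finset.mem_union.1 hx with hx | hx
          · exact ⟨(ht1 x hx).1, (ht1 x hx).2.1⟩
          · exact hE x hx
      | succ m ih =>
        obtain ⟨t, htcard, ht⟩ := ih
        obtain ⟨t2, ht2card, ht2⟩ := rolle_finset (lfzg p c r (m+1)) (lfzg p c r (m+2))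
          (fun x hx => lfzg_hasDerivAt p c r (m+1) hx) t ht
        exact ⟨t2, by omega, fun x hx => ⟨(ht2 x hx).1, (ht2 x hx).2.1⟩⟩
    obtain ⟨t, htcard, ht⟩ := iter (n - 1)
    have hn1 : n - 1 + 1 = n := Nat.succ_pred_eq_of_pos hn
    rw [hn1] at htcard ht
    -- t consists of roots of Qs n
    have hQne : lfzQ p c ≠ 0 := lfzQ_ne_zero p c hinj hc
    have hQsne : lfzQs p c r n ≠ 0 := lfzQs_ne_zero p c hr hri hQne
    have hPzero : (derivative (R := ℝ))^[n] (lfzP p c r) = 0 := by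
      apply Polynomial.iterate_derivative_eq_zero
      calc (lfzP p c r).natDegree ≤ n - 1 := lfz_natDegree_aux p _
        _ < n := by omega
    have hroots : ∀ x ∈ t, (lfzQs p c r n).eval x = 0 := by
      intro x hx
      obtain ⟨hx0, hxg⟩ := ht x hx
      rw [lfzg, hPzero] at hxg
      simp only [Polynomial.eval_zero, sub_zero] at hxg
      rcases mul_eq_zero.1 hxg with h | h
      · exact absurd h (Real.rpow_pos_of_pos hx0 _).ne'
      · exact h
    have hsub : t ⊆ (lfzQs p c r n).roots.toFinset := by
      intro x hx
      rw [Multiset.mem_toFinset, Polynomial.mem_roots']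
      exact ⟨hQsne, hroots x hx⟩
    have hle : t.card ≤ n - 1 := by
      calc t.card ≤ (lfzQs p c r n).roots.toFinset.card := Finset.card_le_card hsub
        _ ≤ Multiset.card (lfzQs p c r n).roots := Multiset.toFinset_card_le _
        _ ≤ (lfzQs p c r n).natDegree := Polynomial.card_roots' _
        _ ≤ n - 1 := lfzQs_natDegree p c r n
    omega
  -- conclude
  have hfin : {x : ℝ | 0 < x ∧
      (∑ j, c j * (if x = p j then r * p j ^ (r - 1) else (x ^ r - p j ^ r) / (x - p j)))
        = 0}.Finite := by
    by_contra hinf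
    have hinf' : Set.Infinite {x : ℝ | 0 < x ∧
        (∑ j, c j * (if x = p j then r * p j ^ (r - 1) else (x ^ r - p j ^ r) / (x - p j)))
          = 0} := hinf
    obtain ⟨t, hts, htc⟩ := hinf'.exists_subset_card_eq n
    have := key t (fun x hx => hts hx)
    omega
  refine ⟨hfin, ?_⟩
  rw [Set.ncard_eq_toFinset_card _ hfin]
  exact key hfin.toFinset (fun x hx => hfin.mem_toFinset.1 hx)
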